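/- Let m ≥ 1 and let B : Matrix (Fin m) (Fin m) (ZMod 2) be a symmetric matrix (Bᵀ = B). Define the associated Z_4-valued quadratic form Q : (Fin m → ZMod 2) → ZMod 4 by Q(x) = ∑ j, ((B j j * x j).val : ZMod 4) + 2 * ∑_{(j,k) with j < k} ((B j k * x j * x k).val : ZMod 4), all sums in ZMod 4. Then for every u : Fin m → ZMod 2, Complex.normSq (Q̂(u)) ≤ 2^(2m − B.rank), where B.rank is the rank of B over the field ZMod 2. Equivalently, |Q̂(u)| ≤ 2^{m − rk(Q)/2}. -/

import Mathlib

/-- The Fourier transform of a `ZMod 4`-valued generalized Boolean function. -/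
noncomputable def fourier4 {m : ℕ} (f : (Fin m → ZMod 2) → ZMod 4) (u : Fin m → ZMod 2) : ℂ :=
  ∑ x : Fin m → ZMod 2, Complex.I ^ (f x).val * (-1 : ℂ) ^ (∑ j, u j * x j).val

/-- The `ZMod 4`-valued quadratic form `Q(x) = x B xᵀ = ∑_j b_{jj} x_j + 2 ∑_{j<k} b_{jk} x_j x_k`
associated with a symmetric binary matrix `B`. -/
def quadForm {m : ℕ} (B : Matrix (Fin m) (Fin m) (ZMod 2)) (x : Fin m → ZMod 2) : ZMod 4 :=
  ∑ j, ((B j j * x j).val : ZMod 4) +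
    2 * ∑ p ∈ Finset.univ.filter (fun p : Fin m × Fin m => p.1 < p.2),
      ((B p.1 p.2 * x p.1 * x p.2).val : ZMod 4)

/-! ### Auxiliary characters -/

noncomputable def stmt13.chi (a : ZMod 4) : ℂ := Complex.I ^ a.val
noncomputable def stmt13.eps (a : ZMod 2) : ℂ := (-1 : ℂ) ^ a.val

namespace stmt13

lemma I_pow_mod4 (n : ℕ) : Complex.I ^ (n % 4) = Complex.I ^ n := by
  conv_rhs => rw [← Nat.div_add_mod n 4, pow_add, pow_mul, Complex.I_pow_four, one_pow, one_mul]

lemma chi_add (a b : ZMod 4) : chi (a + b) = chi a * chi b := by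
  rw [chi, chi, chi, ZMod.val_add, I_pow_mod4, pow_add]

lemma eps_add (a b : ZMod 2) : eps (a + b) = eps a * eps b := by
  rw [eps, eps, eps, ZMod.val_add, ← neg_one_pow_eq_pow_mod_two, pow_add]

/-- The embedding `c ↦ 2 c` of `ZMod 2` into `ZMod 4`, as an additive hom. -/
def dlt : ZMod 2 →+ ZMod 4 where
  toFun a := 2 * (a.val : ZMod 4)
  map_zero' := by decide
  map_add' := by decide

lemma iota_add : ∀ a b : ZMod 2,
    (((a + b).val : ZMod 4)) = (a.val : ZMod 4) + (b.val : ZMod 4) + dlt (a * b) := by decide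

lemma mul_self_zmod2 : ∀ a : ZMod 2, a * a = a := by decide

lemma two_mul_val (c : ZMod 2) : (2 : ZMod 4) * (c.val : ZMod 4) = dlt c := rfl

lemma chi_dlt (c : ZMod 2) : chi (dlt c) = eps c := by
  have hc : c = 0 ∨ c = 1 := by revert c; decide
  rcases hc with h | h <;> subst h
  · have h : dlt (0 : ZMod 2) = 0 := by decide
    rw [h]; simp [chi, eps]
  · have h : dlt (1 : ZMod 2) = 2 := by decide
    rw [h, chi, eps, show (2 : ZMod 4).val = 2 from rfl, show (1 : ZMod 2).val = 1 from rfl]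
    simp [Complex.I_sq]

lemma star_chi (a : ZMod 4) : (starRingEnd ℂ) (chi a) = chi (-a) := by
  have h1 : chi a * chi (-a) = 1 := by
    rw [← chi_add, add_neg_cancel, chi, ZMod.val_zero, pow_zero]
  have h2 : (starRingEnd ℂ) (chi a) = (chi a)⁻¹ := by
    rw [chi, map_pow, Complex.conj_I, ← Complex.inv_I, inv_pow]
  rw [h2, inv_eq_of_mul_eq_one_right h1]

lemma star_eps (a : ZMod 2) : (starRingEnd ℂ) (eps a) = eps a := by
  rw [eps, map_pow, map_neg, map_one]

lemma abs_chi (a : ZMod 4) : ‖chi a‖ = 1 := by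
  rw [chi, norm_pow, Complex.norm_I, one_pow]

lemma abs_eps (a : ZMod 2) : ‖eps a‖ = 1 := by
  rw [eps]; simp

lemma eps_one : eps 1 = -1 := by
  rw [eps, show (1 : ZMod 2).val = 1 from rfl, pow_one]

lemma eps_add_one (a : ZMod 2) : eps (a + 1) = - eps a := by
  rw [eps_add, eps_one, mul_neg_one]

/-! ### The quadratic identity -/

lemma quadForm_apply_add {m : ℕ} (B : Matrix (Fin m) (Fin m) (ZMod 2)) (hB : B.transpose = B)
    (x z : Fin m → ZMod 2) :
    quadForm B (x + z) = quadForm B x + quadForm B z + dlt (∑ j, ∑ k, x j * B j k * z k) := by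
  have hsym : ∀ j k, B k j = B j k := fun j k =>
    (Matrix.transpose_apply B j k).symm.trans (by rw [hB])
  set S := Finset.univ.filter (fun p : Fin m × Fin m => p.1 < p.2) with hSdef
  have hlin : ∑ j, (((B j j * (x + z) j).val : ZMod 4))
      = ∑ j, ((B j j * x j).val : ZMod 4) + ∑ j, ((B j j * z j).val : ZMod 4)
        + ∑ j, dlt (x j * B j j * z j) := by
    rw [← Finset.sum_add_distrib, ← Finset.sum_add_distrib]
    refine Finset.sum_congr rfl fun j _ => ?_
    have h1 : B j j * (x + z) j = B j j * x j + B j j * z j := by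
      simp [Pi.add_apply, mul_add]
    have h2 : (B j j * x j) * (B j j * z j) = x j * B j j * z j := by
      have h3 : (B j j * x j) * (B j j * z j) = (B j j * B j j) * (x j * z j) := by ring
      rw [h3, mul_self_zmod2]; ring
    rw [h1, iota_add, h2]
  have hquad : ∑ p ∈ S, dlt (B p.1 p.2 * (x + z) p.1 * (x + z) p.2)
      = ∑ p ∈ S, dlt (B p.1 p.2 * x p.1 * x p.2)
        + ∑ p ∈ S, dlt (B p.1 p.2 * z p.1 * z p.2)
        + ∑ p ∈ S, dlt (x p.1 * B p.1 p.2 * z p.2)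
        + ∑ p ∈ S, dlt (x p.2 * B p.1 p.2 * z p.1) := by
    rw [← Finset.sum_add_distrib, ← Finset.sum_add_distrib, ← Finset.sum_add_distrib]
    refine Finset.sum_congr rfl fun p _ => ?_
    have h1 : B p.1 p.2 * (x + z) p.1 * (x + z) p.2
        = B p.1 p.2 * x p.1 * x p.2 + B p.1 p.2 * z p.1 * z p.2
          + (x p.1 * B p.1 p.2 * z p.2 + x p.2 * B p.1 p.2 * z p.1) := by
      simp only [Pi.add_apply]; ring
    rw [h1, map_add, map_add, map_add]
    ring
  set g : Fin m × Fin m → ZMod 4 := fun p => dlt (x p.1 * B p.1 p.2 * z p.2) with hg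
  have hdiag : ∑ p ∈ Finset.univ.filter (fun p : Fin m × Fin m => p.1 = p.2), g p
      = ∑ j, dlt (x j * B j j * z j) := by
    refine Finset.sum_nbij' (fun p => p.1) (fun j => (j, j)) ?_ ?_ ?_ ?_ ?_
    · intro a _; exact Finset.mem_univ _
    · intro a _; simp
    · intro a ha
      simp only [Finset.mem_filter] at ha
      exact Prod.ext rfl ha.2
    · intro a _; rfl
    · intro a ha
      simp only [Finset.mem_filter] at ha
      rw [hg]; simp only []
      rw [← ha.2]
  have hgt : ∑ p ∈ Finset.univ.filter (fun p : Fin m × Fin m => p.2 < p.1), g p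
      = ∑ p ∈ S, dlt (x p.2 * B p.1 p.2 * z p.1) := by
    refine Finset.sum_nbij' Prod.swap Prod.swap ?_ ?_ ?_ ?_ ?_
    · intro a ha
      simp only [hSdef, Finset.mem_filter, Finset.mem_univ, true_and, Prod.fst_swap,
        Prod.snd_swap] at ha ⊢
      exact ha
    · intro a ha
      simp only [hSdef, Finset.mem_filter, Finset.mem_univ, true_and, Prod.fst_swap,
        Prod.snd_swap] at ha ⊢
      exact ha
    · intro a _; rfl
    · intro a _; rfl
    · intro a _
      rw [hg]; simp only [Prod.fst_swap, Prod.snd_swap]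
      rw [hsym a.1 a.2]
  have hsplit : ∑ p : Fin m × Fin m, g p
      = ∑ p ∈ S, g p + (∑ p ∈ S, dlt (x p.2 * B p.1 p.2 * z p.1)
          + ∑ j, dlt (x j * B j j * z j)) := by
    rw [← Finset.sum_filter_add_sum_filter_not Finset.univ (fun p : Fin m × Fin m => p.1 < p.2) g]
    congr 1
    rw [← Finset.sum_filter_add_sum_filter_not
      (Finset.univ.filter fun p : Fin m × Fin m => ¬ p.1 < p.2) (fun p => p.2 < p.1) g,
      Finset.filter_filter, Finset.filter_filter]
    congr 1
    · rw [← hgt]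
      congr 1
      apply Finset.filter_congr
      intro p _
      exact ⟨And.right, fun h => ⟨lt_asymm h, h⟩⟩
    · rw [← hdiag]
      congr 1
      apply Finset.filter_congr
      intro p _
      constructor
      · rintro ⟨h1, h2⟩; exact le_antisymm (not_lt.mp h2) (not_lt.mp h1)
      · intro h; rw [h]; exact ⟨lt_irrefl _, lt_irrefl _⟩
  have hL : dlt (∑ j, ∑ k, x j * B j k * z k) = ∑ p : Fin m × Fin m, g p := by
    rw [map_sum, Fintype.sum_prod_type]
    refine Finset.sum_congr rfl fun j _ => ?_
    rw [map_sum]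
  rw [quadForm, quadForm, quadForm]
  rw [Finset.mul_sum, Finset.mul_sum, Finset.mul_sum]
  simp only [two_mul_val]
  rw [hlin, hquad, hL, hsplit]
  ring

/-! ### Character-sum orthogonality -/

lemma sum_eps_linear {m : ℕ} (w : Fin m → ZMod 2) :
    ∑ x : Fin m → ZMod 2, eps (∑ j, x j * w j) = if w = 0 then (2 : ℂ) ^ m else 0 := by
  by_cases hw : w = 0
  · subst hw
    simp only [if_pos rfl, Pi.zero_apply, mul_zero, Finset.sum_const_zero]
    rw [show eps 0 = 1 from by rw [eps, ZMod.val_zero, pow_zero]]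
    rw [Finset.sum_const, Finset.card_univ, nsmul_eq_mul, mul_one]
    norm_num [Fintype.card_fun]
  · rw [if_neg hw]
    obtain ⟨j0, hj0⟩ : ∃ j, w j ≠ 0 := by
      by_contra h; push_neg at h; exact hw (funext fun j => h j)
    have hwj0 : w j0 = 1 := by
      have : ∀ a : ZMod 2, a ≠ 0 → a = 1 := by decide
      exact this _ hj0
    set e : Fin m → ZMod 2 := Pi.single j0 1 with he
    have key : ∀ x : Fin m → ZMod 2,
        eps (∑ j, (x + e) j * w j) = - eps (∑ j, x j * w j) := by
      intro x
      have h1 : ∑ j, (x + e) j * w j = (∑ j, x j * w j) + ∑ j, e j * w j := by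
        rw [← Finset.sum_add_distrib]
        exact Finset.sum_congr rfl fun j _ => by simp [add_mul]
      have h2 : ∑ j, e j * w j = 1 := by
        rw [Finset.sum_eq_single j0]
        · rw [he, Pi.single_eq_same, one_mul, hwj0]
        · intro b _ hb
          rw [he, Pi.single_eq_of_ne hb, zero_mul]
        · intro h; exact absurd (Finset.mem_univ j0) h
      rw [h1, h2, eps_add_one]
    have hbij : ∑ x : Fin m → ZMod 2, eps (∑ j, (x + e) j * w j)
        = ∑ x : Fin m → ZMod 2, eps (∑ j, x j * w j) :=
      Fintype.sum_equiv (Equiv.addRight e) _ _ (fun x => rfl)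
    have hneg : ∑ x : Fin m → ZMod 2, eps (∑ j, x j * w j)
        = - ∑ x : Fin m → ZMod 2, eps (∑ j, x j * w j) := by
      conv_lhs => rw [← hbij]
      rw [← Finset.sum_neg_distrib]
      exact Finset.sum_congr rfl fun x _ => key x
    have h0 : (∑ x : Fin m → ZMod 2, eps (∑ j, x j * w j))
        + ∑ x : Fin m → ZMod 2, eps (∑ j, x j * w j) = 0 := by
      linear_combination hneg
    exact add_self_eq_zero.mp h0

/-! ### Rank and kernel -/

lemma rank_le_m {m : ℕ} (B : Matrix (Fin m) (Fin m) (ZMod 2)) : B.rank ≤ m := by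
  have h := LinearMap.finrank_range_add_finrank_ker B.mulVecLin
  rw [Module.finrank_pi] at h
  simp only [Fintype.card_fin] at h
  rw [Matrix.rank]
  omega

lemma card_ker {m : ℕ} (B : Matrix (Fin m) (Fin m) (ZMod 2)) :
    (Finset.univ.filter (fun z : Fin m → ZMod 2 => B.mulVec z = 0)).card
      = 2 ^ (m - B.rank) := by
  classical
  have h := LinearMap.finrank_range_add_finrank_ker B.mulVecLin
  rw [Module.finrank_pi] at h
  simp only [Fintype.card_fin] at h
  have hcard : Fintype.card (LinearMap.ker B.mulVecLin)
      = 2 ^ Module.finrank (ZMod 2) (LinearMap.ker B.mulVecLin) := by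
    have := Module.card_eq_pow_finrank (K := ZMod 2) (V := LinearMap.ker B.mulVecLin)
    rwa [ZMod.card] at this
  have hfr : Module.finrank (ZMod 2) (LinearMap.ker B.mulVecLin) = m - B.rank := by
    rw [Matrix.rank] at *
    omega
  have hset : (Finset.univ.filter (fun z : Fin m → ZMod 2 => B.mulVec z = 0)).card
      = Fintype.card (LinearMap.ker B.mulVecLin) := by
    rw [← Fintype.card_subtype]
    exact Fintype.card_congr (Equiv.subtypeEquivRight (fun z => by
      simp [LinearMap.mem_ker, Matrix.mulVecLin_apply]))
  rw [hset, hcard, hfr]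

end stmt13

open stmt13 in
/-- The Fourier transform of a `ZMod 4`-valued quadratic form of rank `r` is bounded in
magnitude by `2^{m - r/2}`, i.e. `|Q̂(u)|² ≤ 2^{2m - r}`. -/
theorem stmt13 (m : ℕ) (hm : 1 ≤ m) (B : Matrix (Fin m) (Fin m) (ZMod 2))
    (hB : B.transpose = B) :
    ∀ u : Fin m → ZMod 2,
      Complex.normSq (fourier4 (quadForm B) u) ≤ 2 ^ (2 * m - B.rank) := by
  intro u
  set Q := quadForm B with hQ
  set dt : (Fin m → ZMod 2) → ZMod 2 := fun x => ∑ j, u j * x j with hdt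
  have hfe : fourier4 Q u = ∑ x : Fin m → ZMod 2, chi (Q x) * eps (dt x) := rfl
  set Ker : Finset (Fin m → ZMod 2) :=
    Finset.univ.filter (fun z => B.mulVec z = 0) with hKer
  have hdt_add : ∀ x z : Fin m → ZMod 2, dt (x + z) = dt x + dt z := by
    intro x z
    rw [hdt]
    simp only [← Finset.sum_add_distrib]
    exact Finset.sum_congr rfl fun j _ => by simp [mul_add]
  -- Key identity: |f|² = 2^m ∑_{z ∈ ker B} χ(Q z) ε(u·z)
  have key : (Complex.normSq (fourier4 Q u) : ℂ)
      = (2 : ℂ) ^ m * ∑ z ∈ Ker, chi (Q z) * eps (dt z) := by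
    rw [Complex.normSq_eq_conj_mul_self, hfe, map_sum, Finset.sum_mul_sum]
    have step1 : ∀ x : Fin m → ZMod 2,
        ∑ y : Fin m → ZMod 2,
            (starRingEnd ℂ) (chi (Q x) * eps (dt x)) * (chi (Q y) * eps (dt y))
        = ∑ z : Fin m → ZMod 2,
            chi (Q z) * eps (dt z) * eps (∑ j, ∑ k, x j * B j k * z k) := by
      intro x
      rw [← Fintype.sum_equiv (Equiv.addLeft x)
        (fun z => (starRingEnd ℂ) (chi (Q x) * eps (dt x)) * (chi (Q (x + z)) * eps (dt (x + z))))
        (fun y => (starRingEnd ℂ) (chi (Q x) * eps (dt x)) * (chi (Q y) * eps (dt y)))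
        (fun z => rfl)]
      refine Finset.sum_congr rfl fun z _ => ?_
      rw [map_mul, star_chi, star_eps,
        show Q (x + z) = Q x + Q z + dlt (∑ j, ∑ k, x j * B j k * z k) from
          quadForm_apply_add B hB x z,
        chi_add, chi_add, chi_dlt, hdt_add, eps_add]
      have h1 : chi (-(Q x)) * chi (Q x) = 1 := by
        rw [← chi_add, neg_add_cancel, chi, ZMod.val_zero, pow_zero]
      have h2 : eps (dt x) * eps (dt x) = 1 := by
        rw [← eps_add, show ∀ a : ZMod 2, a + a = 0 from by decide, eps, ZMod.val_zero, pow_zero]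
      calc chi (-(Q x)) * eps (dt x) *
            (chi (Q x) * chi (Q z) * eps (∑ j, ∑ k, x j * B j k * z k)
              * (eps (dt x) * eps (dt z)))
          = (chi (-(Q x)) * chi (Q x)) * (eps (dt x) * eps (dt x)) *
              (chi (Q z) * eps (dt z) * eps (∑ j, ∑ k, x j * B j k * z k)) := by ring
        _ = chi (Q z) * eps (dt z) * eps (∑ j, ∑ k, x j * B j k * z k) := by
              rw [h1, h2, one_mul, one_mul]
    rw [Finset.sum_congr rfl fun x _ => step1 x, Finset.sum_comm]
    have step2 : ∀ z : Fin m → ZMod 2,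
        ∑ x : Fin m → ZMod 2, chi (Q z) * eps (dt z) * eps (∑ j, ∑ k, x j * B j k * z k)
        = chi (Q z) * eps (dt z) * (if B.mulVec z = 0 then (2 : ℂ) ^ m else 0) := by
      intro z
      rw [← Finset.mul_sum]
      congr 1
      have hw : ∀ x : Fin m → ZMod 2,
          (∑ j, ∑ k, x j * B j k * z k) = ∑ j, x j * B.mulVec z j := by
        intro x
        refine Finset.sum_congr rfl fun j _ => ?_
        rw [Matrix.mulVec, dotProduct, Finset.mul_sum]
        exact Finset.sum_congr rfl fun k _ => by ring
      rw [Finset.sum_congr rfl fun x _ => by rw [hw x], sum_eps_linear]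
    rw [Finset.sum_congr rfl fun z _ => step2 z]
    simp only [mul_ite, mul_zero]
    rw [← Finset.sum_filter, ← hKer, ← Finset.sum_mul, mul_comm]
  -- Take absolute values
  have h1 : Complex.normSq (fourier4 Q u)
      = ‖((Complex.normSq (fourier4 Q u) : ℂ))‖ := by
    rw [Complex.norm_real, Real.norm_of_nonneg (Complex.normSq_nonneg _)]
  rw [h1, key, norm_mul]
  have h2 : ‖((2 : ℂ) ^ m)‖ = (2 : ℝ) ^ m := by
    rw [norm_pow, Complex.norm_two]
  have h3 : ‖(∑ z ∈ Ker, chi (Q z) * eps (dt z))‖ ≤ (Ker.card : ℝ) := by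
    calc ‖(∑ z ∈ Ker, chi (Q z) * eps (dt z))‖
        ≤ ∑ z ∈ Ker, ‖(chi (Q z) * eps (dt z))‖ :=
          norm_sum_le _ _
      _ = ∑ z ∈ Ker, 1 := Finset.sum_congr rfl fun z _ => by
          rw [norm_mul, abs_chi, abs_eps, one_mul]
      _ = (Ker.card : ℝ) := by rw [Finset.sum_const, nsmul_eq_mul, mul_one]
  have h4 : (Ker.card : ℝ) = 2 ^ (m - B.rank) := by
    rw [hKer, card_ker]
    push_cast
    ring
  have h5 : (2 : ℝ) ^ m * (2 : ℝ) ^ (m - B.rank) = 2 ^ (2 * m - B.rank) := by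
    rw [← pow_add]
    congr 1
    have := rank_le_m B
    omega
  calc ‖((2:ℂ) ^ m)‖ * ‖(∑ z ∈ Ker, chi (Q z) * eps (dt z))‖
      ≤ (2 : ℝ) ^ m * (Ker.card : ℝ) := by
        rw [h2]
        exact mul_le_mul_of_nonneg_left h3 (by positivity)
    _ = 2 ^ (2 * m - B.rank) := by rw [h4, h5]
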